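/- Let T be selfadjoint on a separable Hilbert space H and (H_n) an increasing sequence of finite-dimensional subspaces of dom(T) with P_n → I strongly such that ⋃_n H_n is a core of T. Then the compressions T_n = P_n T|_{H_n} converge to T in strong resolvent sense, i.e. (T_n − i)^{-1} P_n u → (T − i)^{-1} u for every u ∈ H. -/

import Mathlib

open scoped InnerProductSpace
open Filter Topology

/-- Let `T` be selfadjoint on a separable Hilbert space `H` and `(Hn)` an
increasing sequence of finite-dimensional subspaces of `dom T` with `Pn → I` strongly such
that `⋃ n, Hn n` is a core of `T`.  Then the compressions `Tn = Pn T|_{Hn}` converge to `T`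
in strong resolvent sense: `(Tn − i)⁻¹ Pn u → (T − i)⁻¹ u` for every `u ∈ H`.  Here `R`
denotes the resolvent `(T - i)⁻¹` and `Rn n` the resolvent `(Tn - i)⁻¹` on `Hn n`. -/
theorem galerkin_strong_resolvent_convergence
    {H : Type*} [NormedAddCommGroup H] [InnerProductSpace ℂ H] [CompleteSpace H]
    [TopologicalSpace.SeparableSpace H]
    (T : H →ₗ.[ℂ] H) (hT : IsSelfAdjoint T)
    (Hn : ℕ → Submodule ℂ H) (hfin : ∀ n, FiniteDimensional ℂ (Hn n))
    (hmono : Monotone Hn) (hsub : ∀ n, Hn n ≤ T.domain)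
    -- the orthogonal projections `Pn` onto `Hn`
    (Pn : ℕ → H → H)
    (hPmem : ∀ n u, Pn n u ∈ Hn n)
    (hPfix : ∀ n, ∀ u ∈ Hn n, Pn n u = u)
    (hPsym : ∀ n u v, ⟪Pn n u, v⟫_ℂ = ⟪u, Pn n v⟫_ℂ)
    (hPstrong : ∀ u : H, Tendsto (fun n => Pn n u) atTop (𝓝 u))
    -- `⋃ n, Hn n` is a core of `T`
    (hcore : ∀ x : T.domain, ∀ ε > (0 : ℝ), ∃ n, ∃ y, ∃ hy : y ∈ Hn n,
      ‖(x : H) - y‖ < ε ∧ ‖T x - T ⟨y, hsub n hy⟩‖ < ε)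
    -- `R = (T - i)⁻¹`: the resolvent of `T` at `i`
    (R : H → H) (hRdom : ∀ u, R u ∈ T.domain)
    (hRinv : ∀ u, T ⟨R u, hRdom u⟩ - Complex.I • R u = u)
    (hRleft : ∀ x : T.domain, R (T x - Complex.I • (x : H)) = (x : H))
    -- `Rn n = (Tn - i)⁻¹`: the resolvent of the compression `Tn = Pn T|_{Hn}` on `Hn n`
    (Rn : ℕ → H → H) (hRnmem : ∀ n u, Rn n u ∈ Hn n)
    (hRninv : ∀ n, ∀ u ∈ Hn n,
      Pn n (T ⟨Rn n u, hsub n (hRnmem n u)⟩) - Complex.I • Rn n u = u)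
    (hRnleft : ∀ n, ∀ x, ∀ hx : x ∈ Hn n,
      Rn n (Pn n (T ⟨x, hsub n hx⟩) - Complex.I • x) = x)
    (hRnnorm : ∀ n u, ‖Rn n u‖ ≤ ‖u‖) :
    ∀ u : H, Tendsto (fun n => Rn n (Pn n u)) atTop (𝓝 (R u)) := by
  classical
  intro u
  rw [Metric.tendsto_atTop]
  intro ε hε
  -- `Pn n` agrees with the orthogonal projection
  have hPeq : ∀ n (v : H), Pn n v = (Submodule.orthogonalProjectionOnto (Hn n) v : H) := by
    intro n v
    haveI := hfin n
    refine (Submodule.eq_starProjection_of_mem_of_inner_eq_zero (hPmem n v) ?_).symm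
    intro w hw
    rw [inner_sub_left, hPsym, hPfix n w hw, sub_self]
  have hPsub : ∀ n (a b : H), Pn n (a - b) = Pn n a - Pn n b := by
    intro n a b
    haveI := hfin n
    simp [hPeq, map_sub]
  have hPsmul : ∀ n (c : ℂ) (a : H), Pn n (c • a) = c • Pn n a := by
    intro n c a
    haveI := hfin n
    simp [hPeq, map_smul]
  have hPnorm : ∀ n (v : H), ‖Pn n v‖ ≤ ‖v‖ := by
    intro n v
    haveI := hfin n
    rw [hPeq]
    have h1 : ‖(Submodule.orthogonalProjectionOnto (Hn n) v : H)‖ = ‖Submodule.orthogonalProjectionOnto (Hn n) v‖ := rfl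
    rw [h1]
    calc ‖Submodule.orthogonalProjectionOnto (Hn n) v‖ ≤ ‖Submodule.orthogonalProjectionOnto (Hn n)‖ * ‖v‖ :=
          (Submodule.orthogonalProjectionOnto (Hn n)).le_opNorm v
      _ ≤ 1 * ‖v‖ := by
          exact mul_le_mul_of_nonneg_right (Submodule.orthogonalProjectionOnto_norm_le _) (norm_nonneg v)
      _ = ‖v‖ := one_mul ‖v‖
  set x : H := R u with hx
  set xd : T.domain := ⟨R u, hRdom u⟩ with hxd
  obtain ⟨m, y, hy, h1, h2⟩ := hcore xd (ε/3) (by linarith)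
  refine ⟨m, fun n hn => ?_⟩
  have hyn : y ∈ Hn n := hmono hn hy
  have hyd : (⟨y, hsub n hyn⟩ : T.domain) = ⟨y, hsub m hy⟩ := rfl
  set w : H := Rn n (Pn n u) - y with hw
  have hwmem : w ∈ Hn n := sub_mem (hRnmem n (Pn n u)) hyn
  -- compute `A w = Pn u - A y`
  have hTw : T ⟨w, hsub n hwmem⟩
      = T ⟨Rn n (Pn n u), hsub n (hRnmem n (Pn n u))⟩ - T ⟨y, hsub n hyn⟩ := by
    have : (⟨w, hsub n hwmem⟩ : T.domain)
        = (⟨Rn n (Pn n u), hsub n (hRnmem n (Pn n u))⟩ : T.domain) - ⟨y, hsub n hyn⟩ := rfl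
    rw [this, T.map_sub]
  have hAw : Pn n (T ⟨w, hsub n hwmem⟩) - Complex.I • w
      = Pn n u - (Pn n (T ⟨y, hsub n hyn⟩) - Complex.I • y) := by
    have hr := hRninv n (Pn n u) (hPmem n u)
    rw [hTw, hPsub, hw, smul_sub]
    conv_rhs => rw [← hr]
    abel
  have hwe : w = Rn n (Pn n u - (Pn n (T ⟨y, hsub n hyn⟩) - Complex.I • y)) := by
    conv_lhs => rw [← hRnleft n w hwmem]
    rw [hAw]
  have hwnorm : ‖w‖ ≤ ‖Pn n u - (Pn n (T ⟨y, hsub n hyn⟩) - Complex.I • y)‖ := by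
    rw [hwe]; exact hRnnorm n _
  -- rewrite `Pn u - A y` using `u = T x - i x`
  have hu : u = T xd - Complex.I • x := (hRinv u).symm
  have hPy : Pn n y = y := hPfix n y hyn
  have hsplit : Pn n u - (Pn n (T ⟨y, hsub n hyn⟩) - Complex.I • y)
      = Pn n (T xd - T ⟨y, hsub n hyn⟩) - Complex.I • Pn n (x - y) := by
    rw [hPsub n (T xd) (T ⟨y, hsub n hyn⟩), hPsub n x y, hPy]
    conv_lhs => rw [hu]
    rw [hPsub, hPsmul, smul_sub]
    abel
  have hbound : ‖Pn n u - (Pn n (T ⟨y, hsub n hyn⟩) - Complex.I • y)‖ < ε/3 + ε/3 := by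
    rw [hsplit]
    calc ‖Pn n (T xd - T ⟨y, hsub n hyn⟩) - Complex.I • Pn n (x - y)‖
        ≤ ‖Pn n (T xd - T ⟨y, hsub n hyn⟩)‖ + ‖Complex.I • Pn n (x - y)‖ := norm_sub_le _ _
      _ = ‖Pn n (T xd - T ⟨y, hsub n hyn⟩)‖ + ‖Pn n (x - y)‖ := by
          rw [norm_smul, Complex.norm_I, one_mul]
      _ ≤ ‖T xd - T ⟨y, hsub n hyn⟩‖ + ‖x - y‖ := add_le_add (hPnorm _ _) (hPnorm _ _)
      _ < ε/3 + ε/3 := by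
          refine add_lt_add ?_ h1
          rw [hyd]; exact h2
  have hfinal : ‖Rn n (Pn n u) - x‖ < ε := by
    have h3 : ‖Rn n (Pn n u) - x‖ ≤ ‖w‖ + ‖y - x‖ := by
      have : Rn n (Pn n u) - x = w + (y - x) := by rw [hw]; abel
      rw [this]; exact norm_add_le _ _
    have h4 : ‖y - x‖ < ε/3 := by rw [norm_sub_rev]; exact h1
    have h5 : ‖w‖ < ε/3 + ε/3 := lt_of_le_of_lt hwnorm hbound
    linarith
  rw [dist_eq_norm]
  exact hfinal
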